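/- If a binary relation ⪰ on a convex subset C of ℝ^n is complete (for all a, b ∈ C, a ⪰ b or b ⪰ a), has closed graph, and satisfies extended mixture cancellation, then ⪰ satisfies the Archimedean property: for all a, b, c ∈ C with a ≻ b ≻ c, there exist r, r' ∈ (0,1) such that a ≻ r·a + (1−r)·c ≻ b ≻ r'·a + (1−r')·c ≻ c. -/

import Mathlib

/-- Extended mixture cancellation for a relation on a subset of a real vector space. -/
def ExtMixCancel {V : Type*} [AddCommGroup V] [Module ℝ V]
    (C : Set V) (R : V → V → Prop) : Prop :=
  ∀ (n : ℕ) (a b : Fin (n + 1) → V),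
    (∀ i, a i ∈ C) → (∀ i, b i ∈ C) →
    (∑ i, a i = ∑ i, b i) →
    (∃ k, k ≤ n ∧ (∀ i : Fin (n + 1), (i : ℕ) < k → R (a i) (b i)) ∧
      (∀ i : Fin (n + 1), k ≤ (i : ℕ) → a i = a (Fin.last n) ∧ b i = b (Fin.last n))) →
    R (b (Fin.last n)) (a (Fin.last n))

/-- The graph `{(a, b) ∈ C × C : a ⪰ b}` is closed. -/
def ClosedGraphOn {V : Type*} [TopologicalSpace V] (C : Set V) (R : V → V → Prop) : Prop :=
  IsClosed {p : V × V | p.1 ∈ C ∧ p.2 ∈ C ∧ R p.1 p.2}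

/-- Strict preference: `a ≻ b` iff `a ⪰ b` and not `b ⪰ a`. -/
def StrictPref {V : Type*} (R : V → V → Prop) (a b : V) : Prop :=
  R a b ∧ ¬ R b a

section Aux
variable {V : Type*} [AddCommGroup V] [Module ℝ V] {C : Set V} {R : V → V → Prop}

theorem AuxArch.transR (hcancel : ExtMixCancel C R) {x y z : V} (hx : x ∈ C) (hy : y ∈ C) (hz : z ∈ C)
    (hxy : R x y) (hyz : R y z) : R x z := by
  have := hcancel 2 ![x, y, z] ![y, z, x]
    (by intro i; fin_cases i <;> assumption)
    (by intro i; fin_cases i <;> assumption)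
    (by simp [Fin.sum_univ_three]; abel)
    ⟨2, le_refl 2, by intro i hi; fin_cases i <;> simp_all,
      by intro i hi; fin_cases i <;> simp_all [Fin.last]⟩
  simpa [Fin.last] using this

theorem AuxArch.cancel2 (hcancel : ExtMixCancel C R) {x y w z : V} (hx : x ∈ C) (hy : y ∈ C)
    (hw : w ∈ C) (hz : z ∈ C) (hsum : x + z = y + w) (hxy : R x y) : R w z := by
  have := hcancel 1 ![x, z] ![y, w]
    (by intro i; fin_cases i <;> assumption)
    (by intro i; fin_cases i <;> assumption)
    (by simp [Fin.sum_univ_two, hsum])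
    ⟨1, le_refl 1, by intro i hi; fin_cases i <;> simp_all,
      by intro i hi; fin_cases i <;> simp_all [Fin.last]⟩
  simpa [Fin.last] using this

theorem AuxArch.cancel3 (hcancel : ExtMixCancel C R) {x y u v : V} (hx : x ∈ C) (hy : y ∈ C)
    (hu : u ∈ C) (hv : v ∈ C) (hsum : x + v + v = y + u + u) (hxy : R x y) : R u v := by
  have := hcancel 2 ![x, v, v] ![y, u, u]
    (by intro i; fin_cases i <;> assumption)
    (by intro i; fin_cases i <;> assumption)
    (by simpa [Fin.sum_univ_three] using hsum)
    ⟨1, by norm_num, by intro i hi; fin_cases i <;> simp_all,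
      by intro i hi; fin_cases i <;> simp_all [Fin.last]⟩
  simpa [Fin.last] using this

/-- Midpoint lemma: if `x ≻ y` then `x ≻ (x+y)/2 ≻ y`. -/
theorem AuxArch.midpoint_strict (hcancel : ExtMixCancel C R) {x y : V} (hx : x ∈ C) (hy : y ∈ C)
    (hm : (1/2 : ℝ) • x + (1/2 : ℝ) • y ∈ C) (hxy : R x y) (hyx : ¬ R y x) :
    (R x ((1/2:ℝ)•x+(1/2:ℝ)•y) ∧ ¬ R ((1/2:ℝ)•x+(1/2:ℝ)•y) x) ∧
    (R ((1/2:ℝ)•x+(1/2:ℝ)•y) y ∧ ¬ R y ((1/2:ℝ)•x+(1/2:ℝ)•y)) := by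
  set m := (1/2:ℝ)•x+(1/2:ℝ)•y with hmdef
  have h1 : R x m := AuxArch.cancel3 hcancel hx hy hx hm (by rw [hmdef]; module) hxy
  have h2 : R m y := AuxArch.cancel3 hcancel hx hy hm hy (by rw [hmdef]; module) hxy
  have h3 : ¬ R m x := fun h => hyx (AuxArch.transR hcancel hy hm hx
    (AuxArch.cancel2 hcancel hm hx hy hm (by rw [hmdef]; module) h) h)
  have h4 : ¬ R y m := fun h => hyx (AuxArch.transR hcancel hy hm hx h
    (AuxArch.cancel2 hcancel hy hm hm hx (by rw [hmdef]; module) h))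
  exact ⟨⟨h1, h3⟩, ⟨h2, h4⟩⟩

end Aux

/-- A complete relation with closed graph satisfying extended mixture cancellation
satisfies the Archimedean property. -/
theorem archimedean_of_complete_closedGraph_extMixCancel
    {n : ℕ} (C : Set (Fin n → ℝ)) (R : (Fin n → ℝ) → (Fin n → ℝ) → Prop)
    (hC : Convex ℝ C)
    (hcomp : ∀ a ∈ C, ∀ b ∈ C, R a b ∨ R b a)
    (hclosed : ClosedGraphOn C R)
    (hcancel : ExtMixCancel C R) :
    ∀ a ∈ C, ∀ b ∈ C, ∀ c ∈ C,
      StrictPref R a b → StrictPref R b c →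
      ∃ r ∈ Set.Ioo (0 : ℝ) 1, ∃ r' ∈ Set.Ioo (0 : ℝ) 1,
        StrictPref R a (r • a + (1 - r) • c) ∧
        StrictPref R (r • a + (1 - r) • c) b ∧
        StrictPref R b (r' • a + (1 - r') • c) ∧
        StrictPref R (r' • a + (1 - r') • c) c := by
  intro a ha b hb c hc hab hbc
  obtain ⟨hab1, hab2⟩ := hab
  obtain ⟨hbc1, hbc2⟩ := hbc
  set f : ℝ → (Fin n → ℝ) := fun t => t • a + (1 - t) • c with hf
  have hfC : ∀ t ∈ Set.Icc (0:ℝ) 1, f t ∈ C := fun t ht =>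
    hC ha hc ht.1 (by linarith [ht.2]) (by ring)
  have hfcont : Continuous f := by
    rw [hf]; fun_prop
  have hf1 : f 1 = a := by simp [hf]
  have hf0 : f 0 = c := by simp [hf]
  have hcl1 : IsClosed ((fun t : ℝ => (f t, b)) ⁻¹' {p : (Fin n → ℝ) × (Fin n → ℝ) | p.1 ∈ C ∧ p.2 ∈ C ∧ R p.1 p.2}) :=
    hclosed.preimage (hfcont.prodMk continuous_const)
  have hcl2 : IsClosed ((fun t : ℝ => (b, f t)) ⁻¹' {p : (Fin n → ℝ) × (Fin n → ℝ) | p.1 ∈ C ∧ p.2 ∈ C ∧ R p.1 p.2}) :=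
    hclosed.preimage (continuous_const.prodMk hfcont)
  have key := isPreconnected_closed_iff.mp (isPreconnected_Icc (a := (0:ℝ)) (b := 1)) _ _ hcl1 hcl2
    (fun t ht => (hcomp _ (hfC t ht) _ hb).elim
      (fun h => Or.inl ⟨hfC t ht, hb, h⟩) (fun h => Or.inr ⟨hb, hfC t ht, h⟩))
    ⟨1, ⟨by norm_num, le_refl 1⟩, by simp only [Set.mem_preimage, hf1]; exact ⟨ha, hb, hab1⟩⟩
    ⟨0, ⟨le_refl 0, by norm_num⟩, by simp only [Set.mem_preimage, hf0]; exact ⟨hb, hc, hbc1⟩⟩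
  obtain ⟨t, ht01, ht1, ht2⟩ := key
  have hRdb : R (f t) b := ht1.2.2
  have hRbd : R b (f t) := ht2.2.2
  have hdC : f t ∈ C := ht1.1
  have htne1 : t ≠ 1 := fun h => hab2 (by rwa [h, hf1] at hRbd)
  have htne0 : t ≠ 0 := fun h => hbc2 (by rwa [h, hf0] at hRdb)
  have ht0 : 0 < t := lt_of_le_of_ne ht01.1 (Ne.symm htne0)
  have ht1' : t < 1 := lt_of_le_of_ne ht01.2 htne1
  set d := f t with hd
  -- a ≻ d
  have had1 : R a d := AuxArch.transR hcancel ha hb hdC hab1 hRbd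
  have had2 : ¬ R d a := fun h => hab2 (AuxArch.transR hcancel hb hdC ha hRbd h)
  -- d ≻ c
  have hdc1 : R d c := AuxArch.transR hcancel hdC hb hc hRdb hbc1
  have hdc2 : ¬ R c d := fun h => hbc2 (AuxArch.transR hcancel hc hdC hb h hRdb)
  -- midpoints
  have hm1C : (1/2:ℝ)•a + (1/2:ℝ)•d ∈ C := hC ha hdC (by norm_num) (by norm_num) (by norm_num)
  have hm2C : (1/2:ℝ)•d + (1/2:ℝ)•c ∈ C := hC hdC hc (by norm_num) (by norm_num) (by norm_num)
  obtain ⟨⟨p1, p2⟩, ⟨p3, p4⟩⟩ := AuxArch.midpoint_strict hcancel ha hdC hm1C had1 had2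
  obtain ⟨⟨q1, q2⟩, ⟨q3, q4⟩⟩ := AuxArch.midpoint_strict hcancel hdC hc hm2C hdc1 hdc2
  have heq1 : ((1+t)/2) • a + (1 - (1+t)/2) • c = (1/2:ℝ)•a + (1/2:ℝ)•d := by
    rw [hd, hf]; module
  have heq2 : (t/2) • a + (1 - t/2) • c = (1/2:ℝ)•d + (1/2:ℝ)•c := by
    rw [hd, hf]; module
  refine ⟨(1+t)/2, ⟨by linarith, by linarith⟩, t/2, ⟨by linarith, by linarith⟩, ?_, ?_, ?_, ?_⟩
  · rw [heq1]; exact ⟨p1, p2⟩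
  · rw [heq1]
    refine ⟨AuxArch.transR hcancel hm1C hdC hb p3 hRdb, fun h => p4 ?_⟩
    exact AuxArch.transR hcancel hdC hb hm1C hRdb h
  · rw [heq2]
    refine ⟨AuxArch.transR hcancel hb hdC hm2C hRbd q1, fun h => q2 ?_⟩
    exact AuxArch.transR hcancel hm2C hb hdC h hRbd
  · rw [heq2]; exact ⟨q3, q4⟩
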